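/- For every feasible schedule S of a BPMSTP instance there exists a map y : P_J × H × T → {0, 1} satisfying: (i) for each d ∈ P_J, ∑_{h ∈ H} ∑_{t=1}^{K−d+1} y(d, h, t) = |J_d|, and y(d, h, t) = 0 whenever t > K − d + 1; (ii) for each h ∈ H and t ∈ T, ∑_{d ∈ P_J} ∑_{i = max{1, t−d+1}}^{t} y(d, h, i) ≤ 1; and such that E(S) = ∑_{h ∈ H} u_h ∑_{d ∈ P_J} ∑_{t=1}^{K−d+1} b_{d,t}·y(d, h, t) with b_{d,t} = ∑_{k=t}^{t+d−1} c_k, and C_max(S) = max{t + d − 1 : y(d, h, t) = 1}. -/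

import Mathlib

/-- A BPMSTP instance: `N` jobs with processing times `p j` (`1 ≤ p j ≤ K`),
`M` machines with energy consumption rates `u h ≥ 0`, and a time horizon
`{1, …, K}` of time slots with costs `c t ≥ 0`. -/
structure BInstance where
  N : ℕ
  M : ℕ
  K : ℕ
  hN : 0 < N
  hM : 0 < M
  hK : 0 < K
  p : Fin N → ℕ
  hp : ∀ j, 1 ≤ p j ∧ p j ≤ K
  u : Fin M → ℝ
  hu : ∀ h, 0 ≤ u h
  c : ℕ → ℝ
  hc : ∀ t, 0 ≤ c t

/-- A schedule assigns each job a machine and a set of `p j` time slots,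
with jobs on the same machine using disjoint slot sets. -/
structure Schedule (I : BInstance) where
  mach : Fin I.N → Fin I.M
  slots : Fin I.N → Finset ℕ
  slots_subset : ∀ j, slots j ⊆ Finset.Icc 1 I.K
  slots_card : ∀ j, (slots j).card = I.p j
  disj : ∀ j j', j ≠ j' → mach j = mach j' → Disjoint (slots j) (slots j')

namespace Schedule

variable {I : BInstance}

/-- A schedule is feasible if every job occupies consecutive time slots. -/
def Feasible (S : Schedule I) : Prop :=
  ∀ j, ∃ s, S.slots j = Finset.Ico s (s + I.p j)

/-- The makespan: the largest slot used by any job. -/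
def Cmax (S : Schedule I) : ℕ :=
  Finset.univ.sup fun j => (S.slots j).sup id

/-- The total energy cost. -/
def TEC (S : Schedule I) : ℝ :=
  ∑ j, I.u (S.mach j) * ∑ t ∈ S.slots j, I.c t

/-- Two schedules are equivalent if they have the same makespan and the same TEC. -/
def Equivalent (S S' : Schedule I) : Prop :=
  S.Cmax = S'.Cmax ∧ S.TEC = S'.TEC

theorem slots_nonempty (S : Schedule I) (j : Fin I.N) : (S.slots j).Nonempty := by
  rw [← Finset.card_pos, S.slots_card]
  exact (I.hp j).1

/-- Slot `t` is occupied on machine `h`: some job assigned to `h` contains `t`. -/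
def Occupied (S : Schedule I) (h : Fin I.M) (t : ℕ) : Prop :=
  ∃ j, S.mach j = h ∧ t ∈ S.slots j

/-- A split-schedule: for every job `j`, every slot between `min (T j)` and
`max (T j)` is occupied on the machine of `j`. -/
def IsSplit (S : Schedule I) : Prop :=
  ∀ j t, (S.slots j).min' (S.slots_nonempty j) ≤ t →
    t ≤ (S.slots j).max' (S.slots_nonempty j) → S.Occupied (S.mach j) t

/-- `S` dominates `S'`. -/
def Dominates (S S' : Schedule I) : Prop :=
  S.Cmax ≤ S'.Cmax ∧ S.TEC ≤ S'.TEC ∧ (S.Cmax < S'.Cmax ∨ S.TEC < S'.TEC)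

end Schedule

/-- The set of distinct processing times. -/
def PJ (I : BInstance) : Finset ℕ := Finset.univ.image I.p

/-- The set of jobs with processing time `d`. -/
def Jd (I : BInstance) (d : ℕ) : Finset (Fin I.N) := Finset.univ.filter fun j => I.p j = d

/-- The makespan lower bound `max { ⌊(∑ p j) / M⌋, max p j }`. -/
def Klb (I : BInstance) : ℕ := max ((∑ j, I.p j) / I.M) (Finset.univ.sup I.p)

/-- `bcost I d t = ∑_{k=t}^{t+d-1} c k`, the cumulative cost of `d` slots from `t`. -/
def bcost (I : BInstance) (d t : ℕ) : ℝ := ∑ k ∈ Finset.Icc t (t + d - 1), I.c k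

/-- every feasible schedule `S` induces a 0/1 assignment `y`
satisfying the constraints of Formulation 2, whose TEC and makespan expressions
agree with those of `S`. -/
theorem statement14 (I : BInstance) (S : Schedule I) (hS : S.Feasible) :
    ∃ y : ℕ → Fin I.M → ℕ → ℕ,
      (∀ d h t, y d h t ≤ 1) ∧
      (∀ d h t, y d h t = 1 → d ∈ PJ I ∧ t ∈ Finset.Icc 1 (I.K - d + 1)) ∧
      (∀ d ∈ PJ I,
        ∑ h : Fin I.M, ∑ t ∈ Finset.Icc 1 (I.K - d + 1), y d h t = (Jd I d).card) ∧
      (∀ h : Fin I.M, ∀ t ∈ Finset.Icc 1 I.K,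
        ∑ d ∈ PJ I, ∑ i ∈ Finset.Icc (max 1 (t - d + 1)) t, y d h i ≤ 1) ∧
      S.TEC = ∑ h : Fin I.M, I.u h * ∑ d ∈ PJ I, ∑ t ∈ Finset.Icc 1 (I.K - d + 1),
        bcost I d t * (y d h t : ℝ) ∧
      S.Cmax = ((PJ I) ×ˢ (Finset.univ : Finset (Fin I.M)) ×ˢ Finset.Icc 1 I.K).sup
        (fun x => if y x.1 x.2.1 x.2.2 = 1 then x.2.2 + x.1 - 1 else 0) := by
  classical
  set start : Fin I.N → ℕ := fun j => Classical.choose (hS j) with hstartdef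
  have hstart : ∀ j, S.slots j = Finset.Ico (start j) (start j + I.p j) :=
    fun j => Classical.choose_spec (hS j)
  have hmem1 : ∀ j, start j ∈ S.slots j := by
    intro j
    rw [hstart j, Finset.mem_Ico]
    have := (I.hp j).1
    omega
  have hmem2 : ∀ j, start j + I.p j - 1 ∈ S.slots j := by
    intro j
    rw [hstart j, Finset.mem_Ico]
    have := (I.hp j).1
    omega
  have hbnd : ∀ j, 1 ≤ start j ∧ start j + I.p j - 1 ≤ I.K := by
    intro j
    have h1 := S.slots_subset j (hmem1 j)
    have h2 := S.slots_subset j (hmem2 j)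
    rw [Finset.mem_Icc] at h1 h2
    exact ⟨h1.1, h2.2⟩
  -- two jobs on the same machine sharing a slot are equal
  have hov : ∀ j j' t, S.mach j = S.mach j' → t ∈ S.slots j → t ∈ S.slots j' → j = j' := by
    intro j j' t hm h1 h2
    by_contra hne
    exact (Finset.disjoint_left.mp (S.disj j j' hne hm) h1) h2
  have hinj : ∀ j j', S.mach j = S.mach j' → start j = start j' → I.p j = I.p j' → j = j' := by
    intro j j' hm hs hp
    refine hov j j' (start j) hm (hmem1 j) ?_
    rw [hs]; exact hmem1 j'
  set P : ℕ → Fin I.M → ℕ → Prop :=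
    fun d h t => ∃ j, I.p j = d ∧ S.mach j = h ∧ start j = t with hPdef
  refine ⟨fun d h t => if P d h t then 1 else 0, ?_, ?_, ?_, ?_, ?_, ?_⟩
  · intro d h t; dsimp only; split <;> simp
  · intro d h t hy
    dsimp only at hy
    have hP : P d h t := by by_contra hP; rw [if_neg hP] at hy; simp at hy
    obtain ⟨j, hpj, hmj, hsj⟩ := hP
    have hb := hbnd j
    have hp := I.hp j
    constructor
    · exact Finset.mem_image.mpr ⟨j, Finset.mem_univ j, hpj⟩
    · rw [Finset.mem_Icc]; omega
  · -- cardinality constraint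
    intro d hd
    dsimp only
    rw [← Finset.sum_product']
    have : (∑ x ∈ (Finset.univ : Finset (Fin I.M)) ×ˢ Finset.Icc 1 (I.K - d + 1),
        if P d x.1 x.2 then 1 else 0)
        = (((Finset.univ : Finset (Fin I.M)) ×ˢ Finset.Icc 1 (I.K - d + 1)).filter
            (fun x => P d x.1 x.2)).card := (Finset.card_filter _ _).symm
    rw [this]
    symm
    apply Finset.card_bij (fun j _ => (S.mach j, start j))
    · intro j hj
      rw [Jd, Finset.mem_filter] at hj
      have hb := hbnd j
      have hp := I.hp j
      have hd2 := hj.2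
      refine Finset.mem_filter.mpr ⟨Finset.mem_product.mpr ⟨Finset.mem_univ _, ?_⟩,
        ⟨j, hj.2, rfl, rfl⟩⟩
      show start j ∈ Finset.Icc 1 (I.K - d + 1)
      rw [Finset.mem_Icc]
      omega
    · intro j hj j' hj' heq
      rw [Jd, Finset.mem_filter] at hj hj'
      rw [Prod.mk.injEq] at heq
      exact hinj j j' heq.1 heq.2 (hj.2.trans hj'.2.symm)
    · intro x hx
      rw [Finset.mem_filter] at hx
      obtain ⟨j, hpj, hmj, hsj⟩ := hx.2
      exact ⟨j, by rw [Jd, Finset.mem_filter]; exact ⟨Finset.mem_univ _, hpj⟩,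
        by rw [hmj, hsj]⟩
  · -- capacity constraint
    intro h t ht
    dsimp only
    rw [Finset.mem_Icc] at ht
    rw [← Finset.sum_sigma ((PJ I)) (fun d => Finset.Icc (max 1 (t - d + 1)) t)
        (fun x => if P x.1 h x.2 then 1 else 0)]
    rw [show (∑ x ∈ (PJ I).sigma (fun d => Finset.Icc (max 1 (t - d + 1)) t),
        if P x.1 h x.2 then 1 else 0)
        = (((PJ I).sigma fun d => Finset.Icc (max 1 (t - d + 1)) t).filter
            (fun x => P x.1 h x.2)).card from (Finset.card_filter _ _).symm]
    apply Finset.card_le_one.mpr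
    intro a ha b hb
    rw [Finset.mem_filter, Finset.mem_sigma, Finset.mem_Icc] at ha hb
    obtain ⟨⟨hda, hia⟩, ⟨j, hpj, hmj, hsj⟩⟩ := ha
    obtain ⟨⟨hdb, hib⟩, ⟨j', hpj', hmj', hsj'⟩⟩ := hb
    have hia' := Nat.max_le.mp hia.1
    have hib' := Nat.max_le.mp hib.1
    have hpja := (I.hp j).1
    have hpjb := (I.hp j').1
    have htj : t ∈ S.slots j := by
      rw [hstart j, Finset.mem_Ico]; omega
    have htj' : t ∈ S.slots j' := by
      rw [hstart j', Finset.mem_Ico]; omega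
    have hjj : j = j' := hov j j' t (hmj.trans hmj'.symm) htj htj'
    subst hjj
    exact Sigma.ext (hpj.symm.trans hpj') (heq_of_eq (hsj.symm.trans hsj'))
  · -- TEC
    dsimp only
    have key : ∀ h : Fin I.M,
        (∑ d ∈ PJ I, ∑ t ∈ Finset.Icc 1 (I.K - d + 1),
          bcost I d t * ((if P d h t then 1 else 0 : ℕ) : ℝ))
        = ∑ j ∈ Finset.univ.filter (fun j => S.mach j = h),
            ∑ k ∈ S.slots j, I.c k := by
      intro h
      have step1 : ∀ d, ∀ t, bcost I d t * ((if P d h t then 1 else 0 : ℕ) : ℝ)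
          = if P d h t then bcost I d t else 0 := by
        intro d t; split <;> simp
      simp only [step1]
      rw [← Finset.sum_sigma ((PJ I)) (fun d => Finset.Icc 1 (I.K - d + 1))
          (fun x => if P x.1 h x.2 then bcost I x.1 x.2 else 0)]
      rw [Finset.sum_ite, Finset.sum_const_zero, add_zero]
      symm
      apply Finset.sum_bij (fun j _ => (⟨I.p j, start j⟩ : Σ _ : ℕ, ℕ))
      · intro j hj
        rw [Finset.mem_filter] at hj
        have hb := hbnd j
        have hp := I.hp j
        refine Finset.mem_filter.mpr ⟨Finset.mem_sigma.mpr
          ⟨Finset.mem_image.mpr ⟨j, Finset.mem_univ j, rfl⟩, ?_⟩, ⟨j, rfl, hj.2, rfl⟩⟩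
        show start j ∈ Finset.Icc 1 (I.K - I.p j + 1)
        rw [Finset.mem_Icc]
        omega
      · intro j hj j' hj' heq
        rw [Finset.mem_filter] at hj hj'
        have h1 : I.p j = I.p j' := congrArg (fun s : (Σ _ : ℕ, ℕ) => s.1) heq
        have h2 : start j = start j' := congrArg (fun s : (Σ _ : ℕ, ℕ) => s.2) heq
        exact hinj j j' (hj.2.trans hj'.2.symm) h2 h1
      · intro x hx
        rw [Finset.mem_filter] at hx
        obtain ⟨j, hpj, hmj, hsj⟩ := hx.2
        exact ⟨j, by rw [Finset.mem_filter]; exact ⟨Finset.mem_univ _, hmj⟩,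
          Sigma.ext hpj (heq_of_eq hsj)⟩
      · intro j hj
        have hp := (I.hp j).1
        rw [bcost, hstart j,
          show Finset.Icc (start j) (start j + I.p j - 1)
            = Finset.Ico (start j) (start j + I.p j) by
              rw [← Finset.Ico_add_one_right_eq_Icc]; congr 1; omega]
    simp only [key]
    rw [Schedule.TEC]
    rw [← Finset.sum_fiberwise Finset.univ S.mach
      (fun j => I.u (S.mach j) * ∑ k ∈ S.slots j, I.c k)]
    apply Finset.sum_congr rfl
    intro h _
    rw [Finset.mul_sum]
    apply Finset.sum_congr rfl
    intro j hj
    rw [Finset.mem_filter] at hj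
    rw [hj.2]
  · -- Cmax
    have hsup : ∀ j, (S.slots j).sup id = start j + I.p j - 1 := by
      intro j
      apply le_antisymm
      · apply Finset.sup_le
        intro x hx
        rw [hstart j, Finset.mem_Ico] at hx
        simp only [id]
        omega
      · exact Finset.le_sup (f := id) (hmem2 j)
    dsimp only
    apply le_antisymm
    · apply Finset.sup_le
      intro j _
      rw [hsup j]
      have hb := hbnd j
      have hp := I.hp j
      have hmemx : (I.p j, S.mach j, start j) ∈
          (PJ I) ×ˢ (Finset.univ : Finset (Fin I.M)) ×ˢ Finset.Icc 1 I.K := by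
        refine Finset.mem_product.mpr ⟨Finset.mem_image.mpr ⟨j, Finset.mem_univ j, rfl⟩,
          Finset.mem_product.mpr ⟨Finset.mem_univ _, ?_⟩⟩
        show start j ∈ Finset.Icc 1 I.K
        rw [Finset.mem_Icc]
        omega
      refine le_trans ?_ (Finset.le_sup hmemx)
      have hcond : (if P (I.p j) (S.mach j) (start j) then 1 else 0) = 1 :=
        if_pos ⟨j, rfl, rfl, rfl⟩
      simp only [hcond, eq_self_iff_true, if_true, le_refl]
    · apply Finset.sup_le
      intro x _
      by_cases hP : P x.1 x.2.1 x.2.2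
      · simp only [if_pos hP, eq_self_iff_true, if_true]
        obtain ⟨j, hpj, hmj, hsj⟩ := hP
        have hval : x.2.2 + x.1 - 1 = (S.slots j).sup id := by rw [hsup j, hpj, hsj]
        rw [hval]
        exact Finset.le_sup (f := fun j => (S.slots j).sup id) (Finset.mem_univ j)
      · simp only [if_neg hP, zero_ne_one, if_false]
        exact Nat.zero_le _
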